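/- arXiv:2207.13570 — 2 statements merged into one kernel-verified Lean document; each statement's English description precedes it below -/
import Mathlib

section
/- The infimum over u ∈ H¹₀((−1,1)) of ∫_{−1}^{1} (u'(x)² + g(u(x))) dx, where g(y) = 0 for |y| ≤ 1 and g(y) = y² − 1 for |y| ≥ 1, equals 0 (attained by u ≡ 0), while the infimum of ∫_{−1}^{1} (u'(x)² + |u(x)−1||u(x)+1|) dx over the same class is strictly positive. -/
open Real Set intervalIntegral

/-- Every value of the nonconvex functional is at least `3/32`. -/
lemma nonconvex_lower_bound (u : ℝ → ℝ) (hu : ContDiff ℝ 1 u) (hm : u (-1) = 0) :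
    (3/32 : ℝ) ≤ ∫ x in (-1 : ℝ)..1, ((deriv u x) ^ 2 + |u x - 1| * |u x + 1|) := by
  have huc : Continuous u := hu.continuous
  have hdc : Continuous (deriv u) := hu.continuous_deriv le_rfl
  have hFc : Continuous (fun x => (deriv u x) ^ 2 + |u x - 1| * |u x + 1|) := by
    exact ((hdc.pow 2).add (((huc.sub continuous_const).abs).mul
      ((huc.add continuous_const).abs)))
  have hFi : ∀ a b : ℝ, IntervalIntegrable (fun x => (deriv u x) ^ 2 + |u x - 1| * |u x + 1|)
      MeasureTheory.volume a b := fun a b => hFc.intervalIntegrable a b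
  by_cases hb : ∀ x ∈ Icc (-1:ℝ) 1, |u x| ≤ 1/2
  · -- potential term is ≥ 3/4 everywhere
    have hmono : (∫ x in (-1:ℝ)..1, (3/4 : ℝ)) ≤
        ∫ x in (-1 : ℝ)..1, ((deriv u x) ^ 2 + |u x - 1| * |u x + 1|) := by
      apply intervalIntegral.integral_mono_on (by norm_num)
        (intervalIntegrable_const) (hFi _ _)
      intro x hx
      have h2 := abs_le.mp (hb x hx)
      have he : |u x - 1| * |u x + 1| = 1 - (u x) ^ 2 := by
        rw [← abs_mul]
        have : (u x - 1) * (u x + 1) = (u x) ^ 2 - 1 := by ring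
        rw [this, abs_of_nonpos (by nlinarith)]
        ring
      rw [he]
      nlinarith [sq_nonneg (deriv u x)]
    have : (∫ x in (-1:ℝ)..1, (3/4 : ℝ)) = 3/2 := by simp; norm_num
    linarith
  · push_neg at hb
    obtain ⟨x₀, hx₀, hgt⟩ := hb
    -- kinetic bound: integrand ≥ (1/4)|u'| − 1/64 pointwise
    have hG : Continuous (fun x => (1/4 : ℝ) * |deriv u x| - 1/64) :=
      (continuous_const.mul hdc.abs).sub continuous_const
    have hmono : (∫ x in (-1:ℝ)..1, ((1/4 : ℝ) * |deriv u x| - 1/64)) ≤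
        ∫ x in (-1 : ℝ)..1, ((deriv u x) ^ 2 + |u x - 1| * |u x + 1|) := by
      apply intervalIntegral.integral_mono_on (by norm_num)
        (hG.intervalIntegrable _ _) (hFi _ _)
      intro x _
      have h1 : (0:ℝ) ≤ |u x - 1| * |u x + 1| := mul_nonneg (abs_nonneg _) (abs_nonneg _)
      nlinarith [sq_nonneg (|deriv u x| - 1/8), sq_abs (deriv u x)]
    have hdi : ∀ a b : ℝ, IntervalIntegrable (fun x => |deriv u x|)
        MeasureTheory.volume a b := fun a b => hdc.abs.intervalIntegrable a b
    have hsplit : (∫ x in (-1:ℝ)..1, ((1/4 : ℝ) * |deriv u x| - 1/64)) =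
        (1/4 : ℝ) * (∫ x in (-1:ℝ)..1, |deriv u x|) - 1/32 := by
      rw [intervalIntegral.integral_sub ((hdi _ _).const_mul _) intervalIntegrable_const,
        intervalIntegral.integral_const_mul, intervalIntegral.integral_const]
      norm_num
    -- ∫_{-1}^1 |u'| ≥ ∫_{-1}^{x₀} |u'| ≥ |u x₀| > 1/2
    have hle1 : x₀ ≤ 1 := hx₀.2
    have hge1 : (-1:ℝ) ≤ x₀ := hx₀.1
    have hA : (∫ x in (-1:ℝ)..x₀, |deriv u x|) ≤ ∫ x in (-1:ℝ)..1, |deriv u x| := by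
      rw [← intervalIntegral.integral_add_adjacent_intervals (hdi (-1) x₀) (hdi x₀ 1)]
      have : (0:ℝ) ≤ ∫ x in x₀..1, |deriv u x| :=
        intervalIntegral.integral_nonneg hle1 (fun x _ => abs_nonneg _)
      linarith
    have hftc : (∫ x in (-1:ℝ)..x₀, deriv u x) = u x₀ - u (-1) :=
      intervalIntegral.integral_deriv_eq_sub
        (fun x _ => (hu.differentiable one_ne_zero).differentiableAt)
        (hdc.intervalIntegrable _ _)
    have hB : (1/2 : ℝ) ≤ ∫ x in (-1:ℝ)..x₀, |deriv u x| := by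
      have := intervalIntegral.abs_integral_le_integral_abs (μ := MeasureTheory.volume) (f := deriv u) hge1
      rw [hftc, hm, sub_zero] at this
      linarith
    linarith
/-- For the double-well lower-order term `f₁(y) = |y−1||y+1|`, the convexified
functional `∫ u'² + max(u²−1,0)` has infimum 0 over functions vanishing at ±1,
while the original nonconvex functional `∫ u'² + |u−1||u+1|` has a strictly
positive infimum. -/
theorem convexified_vs_nonconvex_infimum :
    sInf {v : ℝ | ∃ u : ℝ → ℝ, ContDiff ℝ 1 u ∧ u (-1) = 0 ∧ u 1 = 0 ∧
        v = ∫ x in (-1 : ℝ)..1, ((deriv u x) ^ 2 + max ((u x) ^ 2 - 1) 0)} = 0 ∧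
    0 < sInf {v : ℝ | ∃ u : ℝ → ℝ, ContDiff ℝ 1 u ∧ u (-1) = 0 ∧ u 1 = 0 ∧
        v = ∫ x in (-1 : ℝ)..1, ((deriv u x) ^ 2 + |u x - 1| * |u x + 1|)} := by
  constructor
  · apply le_antisymm
    · apply csInf_le
      · refine ⟨0, ?_⟩
        rintro v ⟨u, hu, h1, h2, rfl⟩
        apply intervalIntegral.integral_nonneg (by norm_num)
        intro x _
        exact add_nonneg (sq_nonneg _) (le_max_right _ _)
      · refine ⟨fun _ => 0, contDiff_const, rfl, rfl, ?_⟩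
        simp
    · apply le_csInf
      · exact ⟨0, fun _ => 0, contDiff_const, rfl, rfl, by simp⟩
      · rintro v ⟨u, hu, h1, h2, rfl⟩
        apply intervalIntegral.integral_nonneg (by norm_num)
        intro x _
        exact add_nonneg (sq_nonneg _) (le_max_right _ _)
  · have h : (3/32 : ℝ) ≤ sInf {v : ℝ | ∃ u : ℝ → ℝ, ContDiff ℝ 1 u ∧ u (-1) = 0 ∧ u 1 = 0 ∧
        v = ∫ x in (-1 : ℝ)..1, ((deriv u x) ^ 2 + |u x - 1| * |u x + 1|)} := by
      apply le_csInf
      · refine ⟨2, fun _ => 0, contDiff_const, rfl, rfl, ?_⟩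
        simp
        norm_num
      · rintro v ⟨u, hu, h1, h2, rfl⟩
        exact nonconvex_lower_bound u hu h1
    linarith
end

section
/- Let μ be the measure on [−1,1] × ℝ × ℝ given by μ = (1/2) dx ⊗ (δ_{1/√2} + δ_{−1/√2}) ⊗ δ₀ (in coordinates (x, y, z)), and let ν be the measure on {−1,1} × ℝ given by ν = (1/2)(δ_{−1} + δ₁) ⊗ (δ_{1/√2} + δ_{−1/√2}). Then: (i) ∫ y dμ = 0; (ii) ∫ y² dμ = 1; (iii) ∫ z² dμ = 0; (iv) for every C¹ function φ : [−1,1] × ℝ → ℝ, ∫ (∂_x φ(x,y) + ∂_y φ(x,y)·z) dμ(x,y,z) = ∫ φ(x,y)·x dν(x,y). Consequently μ satisfies all linear occupation-measure constraints of the mean-zero Poincaré problem while achieving objective value 0 < π²/4. -/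
open Real Set MeasureTheory

lemma integrable_dirac'' {α E : Type*} [MeasurableSpace α] [MeasurableSingletonClass α]
    [NormedAddCommGroup E] (f : α → E) (x : α) : Integrable f (Measure.dirac x) := by
  have h : f =ᵐ[Measure.dirac x] fun _ => f x := by
    rw [MeasureTheory.ae_dirac_eq]; exact Filter.eventually_pure.mpr rfl
  exact (integrable_const (f x)).congr h.symm

lemma mu_decomp (a : ℝ) :
    (volume.restrict (Set.Icc (-1 : ℝ) 1)).prod
      ((Measure.dirac a + Measure.dirac (-a)).prod (Measure.dirac (0 : ℝ)))
    = Measure.map (fun x => (x, a, (0:ℝ))) (volume.restrict (Set.Icc (-1 : ℝ) 1))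
      + Measure.map (fun x => (x, -a, (0:ℝ))) (volume.restrict (Set.Icc (-1 : ℝ) 1)) := by
  rw [Measure.add_prod, Measure.dirac_prod_dirac, Measure.dirac_prod_dirac,
    Measure.prod_add, Measure.prod_dirac, Measure.prod_dirac]

lemma nu_decomp (a : ℝ) :
    ((Measure.dirac (-1 : ℝ) + Measure.dirac (1 : ℝ)).prod
      (Measure.dirac a + Measure.dirac (-a)))
    = Measure.dirac ((-1:ℝ), a) + Measure.dirac ((-1:ℝ), -a)
      + (Measure.dirac ((1:ℝ), a) + Measure.dirac ((1:ℝ), -a)) := by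
  rw [Measure.add_prod, Measure.prod_add, Measure.prod_add,
    Measure.dirac_prod_dirac, Measure.dirac_prod_dirac, Measure.dirac_prod_dirac,
    Measure.dirac_prod_dirac]

lemma integral_mu (a : ℝ) (f : ℝ × ℝ × ℝ → ℝ) (hf : Continuous f) :
    (∫ q, f q ∂((2⁻¹ : ENNReal) • ((volume.restrict (Set.Icc (-1 : ℝ) 1)).prod
        ((Measure.dirac a + Measure.dirac (-a)).prod (Measure.dirac (0 : ℝ))))))
    = 2⁻¹ * ((∫ x in Set.Icc (-1:ℝ) 1, f (x, a, 0)) + ∫ x in Set.Icc (-1:ℝ) 1, f (x, -a, 0)) := by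
  have g1 : Measurable (fun x : ℝ => (x, a, (0:ℝ))) := by fun_prop
  have g2 : Measurable (fun x : ℝ => (x, -a, (0:ℝ))) := by fun_prop
  rw [mu_decomp, integral_smul_measure, integral_add_measure, integral_map g1.aemeasurable
    hf.aestronglyMeasurable, integral_map g2.aemeasurable hf.aestronglyMeasurable]
  · norm_num
  · rw [integrable_map_measure hf.aestronglyMeasurable g1.aemeasurable]
    exact (hf.comp (by fun_prop)).integrableOn_Icc
  · rw [integrable_map_measure hf.aestronglyMeasurable g2.aemeasurable]
    exact (hf.comp (by fun_prop)).integrableOn_Icc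

lemma cont_f (φ : ℝ × ℝ → ℝ) (hφ : ContDiff ℝ 1 φ) :
    Continuous (fun q : ℝ × ℝ × ℝ =>
      fderiv ℝ φ (q.1, q.2.1) (1, 0) + fderiv ℝ φ (q.1, q.2.1) (0, 1) * q.2.2) := by
  have h : Continuous (fderiv ℝ φ) := hφ.continuous_fderiv one_ne_zero
  have h2 : Continuous (fun q : ℝ × ℝ × ℝ => fderiv ℝ φ (q.1, q.2.1)) := h.comp (by fun_prop)
  exact (h2.clm_apply continuous_const).add ((h2.clm_apply continuous_const).mul (by fun_prop))

lemma ftc (φ : ℝ × ℝ → ℝ) (hφ : ContDiff ℝ 1 φ) (y : ℝ) :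
    ∫ x in Set.Icc (-1:ℝ) 1, fderiv ℝ φ (x, y) (1, 0) = φ (1, y) - φ (-1, y) := by
  rw [MeasureTheory.integral_Icc_eq_integral_Ioc,
    ← intervalIntegral.integral_of_le (by norm_num : (-1:ℝ) ≤ 1)]
  refine intervalIntegral.integral_eq_sub_of_hasDerivAt (f := fun x => φ (x, y)) ?_ ?_
  · intro x _
    have h1 : HasFDerivAt φ (fderiv ℝ φ (x, y)) (x, y) :=
      (hφ.differentiable one_ne_zero (x, y)).hasFDerivAt
    have h2 : HasDerivAt (fun x : ℝ => (x, y)) ((1 : ℝ), (0 : ℝ)) x :=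
      HasDerivAt.prodMk (hasDerivAt_id x) (hasDerivAt_const x y)
    exact h1.comp_hasDerivAt x h2
  · exact (((hφ.continuous_fderiv one_ne_zero).comp (by fun_prop)).clm_apply
      continuous_const).intervalIntegrable _ _

/-- The explicit occupation/boundary measure pair
`μ = ½ dx ⊗ (δ_{1/√2} + δ_{−1/√2}) ⊗ δ₀` on `[−1,1] × ℝ × ℝ` and
`ν = ½ (δ_{−1} + δ_{1}) ⊗ (δ_{1/√2} + δ_{−1/√2})` satisfies all the linear
occupation-measure constraints of the mean-zero Poincaré problem
(⟨y,μ⟩ = 0, ⟨y²,μ⟩ = 1, ⟨z²,μ⟩ = 0, and the divergence identity for every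
`C¹` test function), while its objective value `⟨z²,μ⟩ = 0` is below `π²/4`. -/
theorem poincare_occupation_measure_feasible :
    let a : ℝ := 1 / Real.sqrt 2
    let μ : Measure (ℝ × ℝ × ℝ) :=
      (2⁻¹ : ENNReal) • ((volume.restrict (Set.Icc (-1 : ℝ) 1)).prod
        ((Measure.dirac a + Measure.dirac (-a)).prod (Measure.dirac (0 : ℝ))))
    let ν : Measure (ℝ × ℝ) :=
      (2⁻¹ : ENNReal) • ((Measure.dirac (-1 : ℝ) + Measure.dirac (1 : ℝ)).prod
        (Measure.dirac a + Measure.dirac (-a)))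
    (∫ q, q.2.1 ∂μ) = 0 ∧
    (∫ q, q.2.1 ^ 2 ∂μ) = 1 ∧
    (∫ q, q.2.2 ^ 2 ∂μ) = 0 ∧
    (∀ φ : ℝ × ℝ → ℝ, ContDiff ℝ 1 φ →
      (∫ q, (fderiv ℝ φ (q.1, q.2.1) (1, 0) + fderiv ℝ φ (q.1, q.2.1) (0, 1) * q.2.2) ∂μ)
        = ∫ q, φ q * q.1 ∂ν) ∧
    (0 : ℝ) < π ^ 2 / 4 := by
  intro a μ ν
  have ha : a ^ 2 = 2⁻¹ := by
    simp only [a, div_pow, one_pow, Real.sq_sqrt (by norm_num : (2:ℝ) ≥ 0)]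
    norm_num
  have hvol : (volume (Set.Icc (-1:ℝ) 1)).toReal = 2 := by
    rw [Real.volume_Icc]; norm_num
  refine ⟨?_, ?_, ?_, ?_, ?_⟩
  · rw [show μ = _ from rfl, integral_mu a _ (by fun_prop)]
    simp [setIntegral_const, hvol]
  · rw [show μ = _ from rfl, integral_mu a _ (by fun_prop)]
    simp [setIntegral_const, hvol, neg_pow, ha]
    norm_num
  · rw [show μ = _ from rfl, integral_mu a _ (by fun_prop)]
    simp
  · intro φ hφ
    rw [show μ = _ from rfl, integral_mu a _ (cont_f φ hφ)]
    simp only [mul_zero, add_zero]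
    rw [ftc φ hφ a, ftc φ hφ (-a)]
    simp only [ν]
    rw [nu_decomp, integral_smul_measure,
      integral_add_measure ((integrable_dirac'' _ _).add_measure (integrable_dirac'' _ _))
        ((integrable_dirac'' _ _).add_measure (integrable_dirac'' _ _)),
      integral_add_measure (integrable_dirac'' _ _) (integrable_dirac'' _ _),
      integral_add_measure (integrable_dirac'' _ _) (integrable_dirac'' _ _),
      integral_dirac, integral_dirac, integral_dirac, integral_dirac]
    norm_num
    ring
  · positivity
end
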